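/- For integers r ≥ t ≥ 0 and f ≥ 0, the one-row row-strict flagged skew factorial Schur polynomial satisfies s̃_{(r)/(t),(f)}(z|b) = e_{r−t}^{[f | r−t−f−1]}(z | τ^{−t}b), i.e. it equals the coefficient of u^{r−t} in the formal power series e_u^{[f]}(z) · e_u^{[r−t−f−1]}(τ^{−t}b). In particular, both sides vanish whenever r − t > f. -/

import Mathlib

open Finset

noncomputable section

variable {R : Type*} [CommRing R]

/-- The formal power series `1/(1 - x·u)`. -/
def geomSeries (x : R) : PowerSeries R := PowerSeries.mk fun m => x ^ m

/-- `e_u^{[k]}(c)`: the power series `∏_{i=1}^k (1 + c_i u)` for `k ≥ 0`, and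
`∏_{i=1}^{-k} (1 - c_i u)⁻¹` for `k < 0`.  The sequence `c` is read at indices `1, 2, …`. -/
def eSer (k : ℤ) (c : ℕ → R) : PowerSeries R :=
  if 0 ≤ k then ∏ i ∈ Finset.range k.toNat, (1 + PowerSeries.C (c (i + 1)) * PowerSeries.X)
  else ∏ i ∈ Finset.range (-k).toNat, geomSeries (c (i + 1))

/-- `q_u(x) = ∏_{i=1}^n (1 + x_i u)/(1 - x_i u)`, with `n` x-variables. -/
def qSer (n : ℕ) (x : ℕ → R) : PowerSeries R :=
  ∏ i ∈ Finset.range n,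
    ((1 + PowerSeries.C (x (i + 1)) * PowerSeries.X) * geomSeries (x (i + 1)))

/-- The coefficient of `u^m` (`m : ℤ`) of a power series; zero when `m < 0`. -/
def coeffZ (m : ℤ) (φ : PowerSeries R) : R :=
  if 0 ≤ m then PowerSeries.coeff m.toNat φ else 0

/-- `q_m^{[ℓ]}(x|c)`: the coefficient of `u^m` in `q_u(x)·e_u^{[ℓ]}(c)`. -/
def qC (m ℓ : ℤ) (n : ℕ) (x c : ℕ → R) : R := coeffZ m (qSer n x * eSer ℓ c)

/-- `q_m^{[k|ℓ]}(x;z|c)`: the coefficient of `u^m` in `q_u(x)·e_u^{[k]}(z)·e_u^{[ℓ]}(c)`. -/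
def qC2 (m k ℓ : ℤ) (n : ℕ) (x z c : ℕ → R) : R :=
  coeffZ m (qSer n x * eSer k z * eSer ℓ c)

/-- `e_m^{[k]}(c)`. -/
def eC (m k : ℤ) (c : ℕ → R) : R := coeffZ m (eSer k c)

/-- `e_m^{[k|ℓ]}(z|c)`: the coefficient of `u^m` in `e_u^{[k]}(z)·e_u^{[ℓ]}(c)`. -/
def eC2 (m k ℓ : ℤ) (z c : ℕ → R) : R := coeffZ m (eSer k z * eSer ℓ c)

/-- Extension of `b` to all integer indices using the convention `b_{-i} = -b_{i+1}` for
`i ≥ 0`; positive indices are untouched.  This also implements the `⋆` substitution. -/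
def bext (b : ℤ → R) : ℤ → R := fun j => if 0 < j then b j else -b (1 - j)

/-- `ε(0) = 1` and `ε(m) = 2·(-1)^m` for `m ≥ 1`. -/
def pfEps (m : ℕ) : ℤ := if m = 0 then 1 else 2 * (-1) ^ m

/-- The subscript `α_i + Σ_{j>i} m_{ij} − Σ_{j<i} m_{ji}` in the Schur–Pfaffian. -/
def pfIdx {r : ℕ} (α : Fin r → ℤ) (m : Fin r → Fin r → ℕ) (i : Fin r) : ℤ :=
  α i + ∑ j, (if i < j then (m i j : ℤ) else 0) - ∑ j, (if j < i then (m j i : ℤ) else 0)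

/-- The Schur–Pfaffian `Pf[c^{(1)}_{α_1} ⋯ c^{(r)}_{α_r}]`, as the (finitely supported) sum
over tuples of nonnegative integers `(m_{ij})_{1 ≤ i < j ≤ r}`. -/
def schurPf {r : ℕ} (c : Fin r → ℤ → R) (α : Fin r → ℤ) : R :=
  ∑ᶠ m ∈ {m : Fin r → Fin r → ℕ | ∀ i j, ¬ i < j → m i j = 0},
    (∏ i, ∏ j, if i < j then (pfEps (m i j) : R) else 1) * ∏ i, c i (pfIdx α m i)

/-- The alphabet of primed, unmarked and circled numbers. -/
inductive MSTEntry where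
  | prime : ℕ → MSTEntry
  | unmarked : ℕ → MSTEntry
  | circ : ℕ → MSTEntry
deriving DecidableEq

namespace MSTEntry

/-- Whether an entry is circled (`1`) or not (`0`). -/
def isCirc : MSTEntry → ℕ
  | circ _ => 1
  | _ => 0

/-- Key realizing the order `1' < 1 < 2' < 2 < ⋯` within each class. -/
def key : MSTEntry → ℕ
  | prime k => 2 * k - 1
  | unmarked k => 2 * k
  | circ k => k

/-- The numeric value of an entry. -/
def val : MSTEntry → ℕ
  | prime k => k
  | unmarked k => k
  | circ k => k

/-- The total order `1' < 1 < 2' < 2 < ⋯ < 1° < 2° < ⋯` on entries of positive value. -/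
def le (a b : MSTEntry) : Prop :=
  a.isCirc < b.isCirc ∨ (a.isCirc = b.isCirc ∧ a.key ≤ b.key)

end MSTEntry

/-- The shifted Young diagram of a strict partition `λ` of length `r`:
boxes `(i, j)` with `1 ≤ i ≤ r` and `i ≤ j ≤ λ_i + i - 1` (rows and columns 1-indexed). -/
def shiftedDiag (r : ℕ) (lam : ℕ → ℕ) : Set (ℕ × ℕ) :=
  {p | 1 ≤ p.1 ∧ p.1 ≤ r ∧ p.1 ≤ p.2 ∧ p.2 ≤ lam p.1 + p.1 - 1}

/-- `T` is a marked shifted tableau of the flagged strict partition `(λ, f)` whose unmarked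
and primed entries have numeric value at most `n` (normalized to `unmarked 0` off the
diagram). -/
def IsMST (n r : ℕ) (lam f : ℕ → ℕ) (T : ℕ × ℕ → MSTEntry) : Prop :=
  (∀ p, p ∉ shiftedDiag r lam → T p = .unmarked 0) ∧
  (∀ p ∈ shiftedDiag r lam, 1 ≤ (T p).val) ∧
  (∀ i j j', (i, j) ∈ shiftedDiag r lam → (i, j') ∈ shiftedDiag r lam → j ≤ j' →
    (T (i, j)).le (T (i, j'))) ∧
  (∀ i i' j, (i, j) ∈ shiftedDiag r lam → (i', j) ∈ shiftedDiag r lam → i ≤ i' →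
    (T (i, j)).le (T (i', j))) ∧
  (∀ i i' j k k', (i, j) ∈ shiftedDiag r lam → (i', j) ∈ shiftedDiag r lam → i < i' →
    T (i, j) = .unmarked k → T (i', j) = .unmarked k' → k < k') ∧
  (∀ i j j' k k', (i, j) ∈ shiftedDiag r lam → (i, j') ∈ shiftedDiag r lam → j < j' →
    T (i, j) = .prime k → T (i, j') = .prime k' → k < k') ∧
  (∀ i j j' k k', (i, j) ∈ shiftedDiag r lam → (i, j') ∈ shiftedDiag r lam → j < j' →
    T (i, j) = .circ k → T (i, j') = .circ k' → k < k') ∧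
  (∀ p ∈ shiftedDiag r lam, (T p).le (.circ (f p.1))) ∧
  (∀ p ∈ shiftedDiag r lam, ∀ k, (T p = .unmarked k ∨ T p = .prime k) → k ≤ n)

/-- The factor of the weight `(xz|b)^T` contributed by the entry at box `p`.  The convention
`b_{-i} = -b_{i+1}` is implemented by `bext`. -/
def mstFactor (x z : ℕ → R) (b : ℤ → R) (p : ℕ × ℕ) : MSTEntry → R
  | .unmarked k => x k + bext b ((p.2 : ℤ) - (p.1 : ℤ))
  | .prime k => x k - bext b ((p.2 : ℤ) - (p.1 : ℤ))
  | .circ k => z k + bext b ((k : ℤ) + (p.1 : ℤ) - (p.2 : ℤ))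

/-- The weight `(xz|b)^T` of a marked shifted tableau. -/
def mstWeight (r : ℕ) (lam : ℕ → ℕ) (x z : ℕ → R) (b : ℤ → R) (T : ℕ × ℕ → MSTEntry) : R :=
  ∏ i ∈ Finset.range r, ∏ j ∈ Finset.range (lam (i + 1)),
    mstFactor x z b (i + 1, i + 1 + j) (T (i + 1, i + 1 + j))

/-- The flagged factorial Q-function `Q_{λ,f}(x;z|b)`, with `n` x-variables. -/
def Qflag (n r : ℕ) (lam f : ℕ → ℕ) (x z : ℕ → R) (b : ℤ → R) : R :=
  ∑ᶠ T ∈ {T : ℕ × ℕ → MSTEntry | IsMST n r lam f T}, mstWeight r lam x z b T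

/-- Ivanov's factorial Q-function `Q_λ(x|b)`: the case of the zero flag (no circled
entries, so the z-variables do not occur). -/
def QIvanov (n r : ℕ) (lam : ℕ → ℕ) (x : ℕ → R) (b : ℤ → R) : R :=
  Qflag n r lam (fun _ => 0) x (fun _ => 0) b

/-- The skew Young diagram `κ/ν`: boxes `(i, j)` with `1 ≤ i ≤ r`, `ν_i < j ≤ κ_i`. -/
def skewDiag (r : ℕ) (kap nu : ℕ → ℕ) : Set (ℕ × ℕ) :=
  {p | 1 ≤ p.1 ∧ p.1 ≤ r ∧ nu p.1 < p.2 ∧ p.2 ≤ kap p.1}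

/-- `t` is a row-strict flagged tableau of `(κ/ν, f)` (normalized to `0` off the diagram). -/
def IsRST (r : ℕ) (kap nu f : ℕ → ℕ) (t : ℕ × ℕ → ℕ) : Prop :=
  (∀ p, p ∉ skewDiag r kap nu → t p = 0) ∧
  (∀ p ∈ skewDiag r kap nu, 1 ≤ t p) ∧
  (∀ i j j', (i, j) ∈ skewDiag r kap nu → (i, j') ∈ skewDiag r kap nu → j < j' →
    t (i, j) < t (i, j')) ∧
  (∀ i i' j, (i, j) ∈ skewDiag r kap nu → (i', j) ∈ skewDiag r kap nu → i ≤ i' →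
    t (i, j) ≤ t (i', j)) ∧
  (∀ p ∈ skewDiag r kap nu, t p ≤ f p.1)

/-- The weight `∏_{e ∈ T} (z_{|e|} + b_{|e| + r(e) - c(e)})` of a row-strict flagged tableau. -/
def rstWeight (r : ℕ) (kap nu : ℕ → ℕ) (z : ℕ → R) (b : ℤ → R) (t : ℕ × ℕ → ℕ) : R :=
  ∏ i ∈ Finset.range r, ∏ j ∈ Finset.range (kap (i + 1) - nu (i + 1)),
    (z (t (i + 1, nu (i + 1) + 1 + j)) +
      b ((t (i + 1, nu (i + 1) + 1 + j) : ℤ) + ((i : ℤ) + 1) - ((nu (i + 1) : ℤ) + 1 + (j : ℤ))))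

/-- The row-strict flagged skew factorial Schur polynomial `s̃_{κ/ν,f}(z|b)`. -/
def sTilde (r : ℕ) (kap nu f : ℕ → ℕ) (z : ℕ → R) (b : ℤ → R) : R :=
  ∑ᶠ t ∈ {t : ℕ × ℕ → ℕ | IsRST r kap nu f t}, rstWeight r kap nu z b t


namespace Stmt4Aux

open PowerSeries

lemma coeff_one_add_mul (φ : PowerSeries R) (a : R) (n : ℕ) :
    (PowerSeries.coeff (n + 1)) (φ * (1 + PowerSeries.C a * PowerSeries.X)) =
      PowerSeries.coeff (n + 1) φ + a * PowerSeries.coeff n φ := by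
  have h : φ * (1 + PowerSeries.C a * PowerSeries.X)
      = φ + PowerSeries.C a * (φ * PowerSeries.X) := by ring
  rw [h, map_add, PowerSeries.coeff_C_mul, PowerSeries.coeff_succ_mul_X]

lemma coeff_one_sub_mul (φ : PowerSeries R) (a : R) (n : ℕ) :
    (PowerSeries.coeff (n + 1)) (φ * (1 - PowerSeries.C a * PowerSeries.X)) =
      PowerSeries.coeff (n + 1) φ - a * PowerSeries.coeff n φ := by
  have h : (1 : PowerSeries R) - PowerSeries.C a * PowerSeries.X
      = 1 + PowerSeries.C (-a) * PowerSeries.X := by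
    rw [map_neg]; ring
  rw [h, coeff_one_add_mul]; ring

lemma geom_mul_one_sub (x : R) :
    geomSeries x * (1 - PowerSeries.C x * PowerSeries.X) = 1 := by
  ext n
  cases n with
  | zero =>
    simp [PowerSeries.coeff_zero_eq_constantCoeff, geomSeries]
  | succ n =>
    rw [coeff_one_sub_mul]
    simp [geomSeries, PowerSeries.coeff_mk, PowerSeries.coeff_one, pow_succ]
    ring

lemma eSer_natCast (k : ℕ) (c : ℕ → R) :
    eSer (k : ℤ) c = ∏ i ∈ Finset.range k, (1 + PowerSeries.C (c (i + 1)) * PowerSeries.X) := by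
  rw [eSer, if_pos (Int.natCast_nonneg k), Int.toNat_natCast]

lemma eSer_negCast (k : ℕ) (c : ℕ → R) :
    eSer (-(k : ℤ)) c = ∏ i ∈ Finset.range k, geomSeries (c (i + 1)) := by
  cases k with
  | zero => simp [eSer]
  | succ k =>
    rw [eSer, if_neg (by omega)]
    norm_num

lemma eSer_neg_mul (k : ℕ) (c : ℕ → R) :
    eSer (-(k : ℤ)) c
      = eSer (-(k : ℤ) - 1) c * (1 - PowerSeries.C (c (k + 1)) * PowerSeries.X) := by
  have h : -(k : ℤ) - 1 = -((k + 1 : ℕ) : ℤ) := by push_cast; ring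
  rw [h, eSer_negCast, eSer_negCast, Finset.prod_range_succ, mul_assoc,
    geom_mul_one_sub, mul_one]

lemma coeff_prod_linear_eq_zero (g : ℕ → R) (k : ℕ) :
    ∀ n : ℕ, k < n →
      PowerSeries.coeff n (∏ i ∈ Finset.range k, (1 + PowerSeries.C (g i) * PowerSeries.X)) = 0 := by
  induction k with
  | zero =>
    intro n hn
    simp [PowerSeries.coeff_one]
    omega
  | succ k ih =>
    intro n hn
    obtain ⟨n', rfl⟩ : ∃ n', n = n' + 1 := ⟨n - 1, by omega⟩
    rw [Finset.prod_range_succ, coeff_one_add_mul, ih _ (by omega), ih _ (by omega)]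
    ring

lemma coeff_mul_eq_zero (φ ψ : PowerSeries R) (a b n : ℕ)
    (hφ : ∀ i, a < i → PowerSeries.coeff i φ = 0)
    (hψ : ∀ j, b < j → PowerSeries.coeff j ψ = 0)
    (h : a + b < n) : PowerSeries.coeff n (φ * ψ) = 0 := by
  rw [PowerSeries.coeff_mul]
  apply Finset.sum_eq_zero
  intro p hp
  rw [Finset.HasAntidiagonal.mem_antidiagonal] at hp
  rcases lt_or_ge a p.1 with h1 | h1
  · rw [hφ _ h1, zero_mul]
  · rw [hψ _ (by omega), mul_zero]

lemma constCoeff_eSer (k : ℤ) (c : ℕ → R) :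
    PowerSeries.constantCoeff (eSer k c) = 1 := by
  rw [eSer]
  split
  · rw [map_prod]
    apply Finset.prod_eq_one
    intro i _
    simp
  · rw [map_prod]
    apply Finset.prod_eq_one
    intro i _
    rw [← PowerSeries.coeff_zero_eq_constantCoeff, geomSeries, PowerSeries.coeff_mk, pow_zero]

lemma eC2_natCast (M : ℕ) (k ℓ : ℤ) (z c : ℕ → R) :
    eC2 (M : ℤ) k ℓ z c = PowerSeries.coeff M (eSer k z * eSer ℓ c) := by
  rw [eC2, coeffZ, if_pos (Int.natCast_nonneg M), Int.toNat_natCast]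

/-- `E m f = e_m^{[f | m-f-1]}(z|c)`. -/
def Efun (z c : ℕ → R) (m f : ℕ) : R := eC2 (m : ℤ) (f : ℤ) ((m : ℤ) - f - 1) z c

lemma Efun_zero (z c : ℕ → R) (f : ℕ) : Efun z c 0 f = 1 := by
  rw [Efun, eC2_natCast, PowerSeries.coeff_zero_eq_constantCoeff, map_mul,
    constCoeff_eSer, constCoeff_eSer, mul_one]

lemma Efun_vanish (z c : ℕ → R) {m f : ℕ} (h : f < m) : Efun z c m f = 0 := by
  have h1 : (m : ℤ) - f - 1 = ((m - f - 1 : ℕ) : ℤ) := by omega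
  rw [Efun, h1, eC2_natCast, eSer_natCast, eSer_natCast]
  exact coeff_mul_eq_zero _ _ f (m - f - 1) m
    (fun i hi => coeff_prod_linear_eq_zero _ _ _ hi)
    (fun j hj => coeff_prod_linear_eq_zero _ _ _ hj) (by omega)

lemma Efun_rec (z c : ℕ → R) {m f : ℕ} (hm : m ≤ f) :
    Efun z c (m + 1) (f + 1)
      = Efun z c (m + 1) f + (z (f + 1) + c (f + 1 - m)) * Efun z c m f := by
  obtain ⟨d, rfl⟩ := Nat.exists_eq_add_of_le hm
  have h1 : ((m + 1 : ℕ) : ℤ) - ((m + d + 1 : ℕ) : ℤ) - 1 = -((d + 1 : ℕ) : ℤ) := by push_cast; ring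
  have h2 : ((m + 1 : ℕ) : ℤ) - ((m + d : ℕ) : ℤ) - 1 = -((d : ℕ) : ℤ) := by push_cast; ring
  have h3 : ((m : ℕ) : ℤ) - ((m + d : ℕ) : ℤ) - 1 = -((d + 1 : ℕ) : ℤ) := by push_cast; ring
  have hidx : m + d + 1 - m = d + 1 := by omega
  rw [Efun, Efun, Efun, h1, h2, h3, eC2_natCast, eC2_natCast, eC2_natCast, hidx]
  set A := eSer ((m + d : ℕ) : ℤ) z with hA
  set B := eSer (-((d + 1 : ℕ) : ℤ)) c with hB
  have hz : eSer ((m + d + 1 : ℕ) : ℤ) z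
      = A * (1 + PowerSeries.C (z (m + d + 1)) * PowerSeries.X) := by
    rw [hA, eSer_natCast, eSer_natCast, Finset.prod_range_succ]
  have hc : eSer (-((d : ℕ) : ℤ)) c
      = B * (1 - PowerSeries.C (c (d + 1)) * PowerSeries.X) := by
    rw [hB]
    have : -((d : ℕ) : ℤ) - 1 = -((d + 1 : ℕ) : ℤ) := by push_cast; ring
    rw [← this, eSer_neg_mul]
  rw [hz, hc]
  have e1 : A * (1 + PowerSeries.C (z (m + d + 1)) * PowerSeries.X) * B
      = (A * B) * (1 + PowerSeries.C (z (m + d + 1)) * PowerSeries.X) := by ring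
  have e2 : A * (B * (1 - PowerSeries.C (c (d + 1)) * PowerSeries.X))
      = (A * B) * (1 - PowerSeries.C (c (d + 1)) * PowerSeries.X) := by ring
  rw [e1, e2, coeff_one_add_mul, coeff_one_sub_mul]
  ring

end Stmt4Aux

namespace Stmt4Aux

/-- The common recursion polynomial. -/
def Spoly (z : ℕ → R) (γ : ℕ → ℕ → R) : ℕ → ℕ → R
  | 0, _ => 1
  | _ + 1, 0 => 0
  | m + 1, f + 1 => Spoly z γ (m + 1) f + (z (f + 1) + γ m f) * Spoly z γ m f

lemma Spoly_eq_zero (z : ℕ → R) (γ : ℕ → ℕ → R) :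
    ∀ f m : ℕ, f < m → Spoly z γ m f = 0 := by
  intro f
  induction f with
  | zero =>
    intro m hm
    obtain ⟨m', rfl⟩ : ∃ m', m = m' + 1 := ⟨m - 1, by omega⟩
    rfl
  | succ f ih =>
    intro m hm
    obtain ⟨m', rfl⟩ : ∃ m', m = m' + 1 := ⟨m - 1, by omega⟩
    show Spoly z γ (m' + 1) f + (z (f + 1) + γ m' f) * Spoly z γ m' f = 0
    rw [ih _ (by omega), ih _ (by omega), mul_zero, add_zero]

lemma Spoly_congr (z : ℕ → R) (γ γ' : ℕ → ℕ → R)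
    (h : ∀ m f : ℕ, m ≤ f → γ m f = γ' m f) :
    ∀ f m : ℕ, Spoly z γ m f = Spoly z γ' m f := by
  intro f
  induction f with
  | zero =>
    intro m
    cases m with
    | zero => rfl
    | succ m => rfl
  | succ f ih =>
    intro m
    cases m with
    | zero => rfl
    | succ m =>
      show Spoly z γ (m + 1) f + (z (f + 1) + γ m f) * Spoly z γ m f
        = Spoly z γ' (m + 1) f + (z (f + 1) + γ' m f) * Spoly z γ' m f
      rcases le_or_gt m f with hm | hm
      · rw [ih, ih, h m f hm]
      · rw [ih, ih, Spoly_eq_zero z γ' f m hm, mul_zero, mul_zero]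

lemma Efun_eq_Spoly (z c : ℕ → R) :
    ∀ f m : ℕ, Efun z c m f = Spoly z (fun m f => c (f + 1 - m)) m f := by
  intro f
  induction f with
  | zero =>
    intro m
    cases m with
    | zero => rw [Efun_zero]; rfl
    | succ m => rw [Efun_vanish z c (by omega), Spoly_eq_zero z _ 0 (m + 1) (by omega)]
  | succ f ih =>
    intro m
    cases m with
    | zero => rw [Efun_zero]; rfl
    | succ m =>
      rcases le_or_gt m f with hm | hm
      · rw [Efun_rec z c hm, ih (m + 1), ih m]
        rfl
      · rw [Efun_vanish z c (by omega), Spoly_eq_zero z _ (f + 1) (m + 1) (by omega)]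

end Stmt4Aux

namespace Stmt4Aux

/-- Index set: strictly increasing `m`-tuples with values in `[1, f]`. -/
def idxSet (m f : ℕ) : Finset (Fin m → ℕ) :=
  (Fintype.piFinset fun _ => Finset.Icc 1 f).filter
    (fun a => ∀ i j : Fin m, i < j → a i < a j)

/-- Weight of a tuple. -/
def Wfun (t : ℕ) (z : ℕ → R) (b : ℤ → R) {m : ℕ} (a : Fin m → ℕ) : R :=
  ∏ j : Fin m, (z (a j) + b ((a j : ℤ) - (t : ℤ) - ((j : ℕ) : ℤ)))

lemma mem_idxSet {m f : ℕ} (a : Fin m → ℕ) :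
    a ∈ idxSet m f ↔ (∀ j : Fin m, 1 ≤ a j ∧ a j ≤ f) ∧ ∀ i j : Fin m, i < j → a i < a j := by
  simp [idxSet, Fintype.mem_piFinset, Finset.mem_Icc]

lemma Wfun_snoc (t : ℕ) (z : ℕ → R) (b : ℤ → R) {m : ℕ} (a : Fin m → ℕ) (v : ℕ) :
    Wfun t z b (Fin.snoc a v : Fin (m + 1) → ℕ)
      = (z v + b ((v : ℤ) - (t : ℤ) - (m : ℤ))) * Wfun t z b a := by
  unfold Wfun
  rw [Fin.prod_univ_castSucc, mul_comm]
  simp [Fin.snoc_castSucc, Fin.snoc_last]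

lemma sum_W (t : ℕ) (z : ℕ → R) (b : ℤ → R) :
    ∀ f m : ℕ, ∑ a ∈ idxSet m f, Wfun t z b a
      = Spoly z (fun m f => b ((f : ℤ) + 1 - t - m)) m f := by
  intro f
  induction f with
  | zero =>
    intro m
    cases m with
    | zero =>
      have h : idxSet 0 0 = {(fun j => 0 : Fin 0 → ℕ)} := by
        rw [Finset.eq_singleton_iff_unique_mem]
        constructor
        · rw [mem_idxSet]
          exact ⟨fun j => j.elim0, fun i => i.elim0⟩
        · intro a _
          funext j
          exact j.elim0
      rw [h, Finset.sum_singleton]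
      show Wfun t z b _ = 1
      rw [Wfun]
      simp
    | succ m =>
      have h : idxSet (m + 1) 0 = ∅ := by
        rw [Finset.eq_empty_iff_forall_notMem]
        intro a ha
        rw [mem_idxSet] at ha
        have := ha.1 0
        omega
      rw [h, Finset.sum_empty, Spoly_eq_zero z _ 0 (m + 1) (by omega)]
  | succ f ih =>
    intro m
    cases m with
    | zero =>
      have h : idxSet 0 (f + 1) = {(fun j => 0 : Fin 0 → ℕ)} := by
        rw [Finset.eq_singleton_iff_unique_mem]
        constructor
        · rw [mem_idxSet]
          exact ⟨fun j => j.elim0, fun i => i.elim0⟩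
        · intro a _
          funext j
          exact j.elim0
      rw [h, Finset.sum_singleton]
      show Wfun t z b _ = 1
      rw [Wfun]
      simp
    | succ m =>
      classical
      rw [← Finset.sum_filter_add_sum_filter_not (idxSet (m + 1) (f + 1))
        (fun a => a (Fin.last m) = f + 1)]
      have hnot : (idxSet (m + 1) (f + 1)).filter (fun a => ¬ a (Fin.last m) = f + 1)
          = idxSet (m + 1) f := by
        ext a
        rw [Finset.mem_filter, mem_idxSet, mem_idxSet]
        constructor
        · rintro ⟨⟨hb, hmono⟩, hne⟩
          have hle : ∀ j : Fin (m + 1), a j ≤ a (Fin.last m) := by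
            intro j
            rcases lt_or_eq_of_le (Fin.le_last j) with hj | hj
            · exact le_of_lt (hmono _ _ hj)
            · rw [hj]
          have hlast : a (Fin.last m) ≤ f := by
            have := (hb (Fin.last m)).2
            omega
          exact ⟨fun j => ⟨(hb j).1, le_trans (hle j) hlast⟩, hmono⟩
        · rintro ⟨hb, hmono⟩
          refine ⟨⟨fun j => ⟨(hb j).1, by have := (hb j).2; omega⟩, hmono⟩, ?_⟩
          have := (hb (Fin.last m)).2
          omega
      have hyes : ∑ a ∈ (idxSet (m + 1) (f + 1)).filter (fun a => a (Fin.last m) = f + 1),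
            Wfun t z b a
          = (z (f + 1) + b ((f : ℤ) + 1 - t - m)) * ∑ a ∈ idxSet m f, Wfun t z b a := by
        rw [Finset.mul_sum]
        apply Finset.sum_nbij' (fun a => a ∘ Fin.castSucc) (fun a => Fin.snoc a (f + 1))
        · intro a ha
          rw [Finset.mem_filter, mem_idxSet] at ha
          obtain ⟨⟨hb, hmono⟩, hlast⟩ := ha
          rw [mem_idxSet]
          simp only [Function.comp_apply]
          constructor
          · intro j
            refine ⟨(hb _).1, ?_⟩
            have hlt : a (Fin.castSucc j) < a (Fin.last m) :=
              hmono _ _ (Fin.castSucc_lt_last j)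
            omega
          · intro i j hij
            exact hmono _ _ (Fin.castSucc_lt_castSucc_iff.mpr hij)
        · intro a ha
          rw [mem_idxSet] at ha
          obtain ⟨hb, hmono⟩ := ha
          rw [Finset.mem_filter, mem_idxSet]
          refine ⟨⟨?_, ?_⟩, Fin.snoc_last _ _⟩
          · intro j
            refine Fin.lastCases ?_ ?_ j
            · rw [Fin.snoc_last]; omega
            · intro i
              rw [Fin.snoc_castSucc]
              exact ⟨(hb i).1, by have := (hb i).2; omega⟩
          · intro i j hij
            rcases Fin.eq_castSucc_or_eq_last j with ⟨j', rfl⟩ | rfl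
            · have hi' : i ≠ Fin.last m :=
                ne_of_lt (lt_of_lt_of_le hij (Fin.le_last _))
              obtain ⟨i', rfl⟩ := Fin.exists_castSucc_eq.mpr hi'
              rw [Fin.snoc_castSucc, Fin.snoc_castSucc]
              exact hmono _ _ (Fin.castSucc_lt_castSucc_iff.mp hij)
            · have hi' : i ≠ Fin.last m := ne_of_lt hij
              obtain ⟨i', rfl⟩ := Fin.exists_castSucc_eq.mpr hi'
              rw [Fin.snoc_last, Fin.snoc_castSucc]
              have := (hb i').2
              omega
        · intro a ha
          rw [Finset.mem_filter] at ha
          funext j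
          refine Fin.lastCases ?_ ?_ j
          · rw [Fin.snoc_last, ha.2]
          · intro i
            rw [Fin.snoc_castSucc]
            rfl
        · intro a ha
          funext j
          exact Fin.snoc_castSucc _ _ _
        · intro a ha
          rw [Finset.mem_filter] at ha
          have ha2 : a = Fin.snoc (a ∘ Fin.castSucc) (f + 1) := by
            funext j
            rcases Fin.eq_castSucc_or_eq_last j with ⟨j', rfl⟩ | rfl
            · rw [Fin.snoc_castSucc]; rfl
            · rw [Fin.snoc_last, ha.2]
          conv_lhs => rw [ha2]
          rw [Wfun_snoc]
          norm_num
      rw [hnot, hyes, ih m, ih (m + 1)]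
      show _ = Spoly z _ (m + 1) f + (z (f + 1) + b ((f : ℤ) + 1 - t - m)) * Spoly z _ m f
      ring

end Stmt4Aux

namespace Stmt4Aux

/-- Encode a tuple as a one-row tableau. -/
def emb (r t : ℕ) (a : Fin (r - t) → ℕ) : ℕ × ℕ → ℕ :=
  fun p => if h : p.1 = 1 ∧ t < p.2 ∧ p.2 ≤ r then a ⟨p.2 - t - 1, by omega⟩ else 0

lemma emb_box (r t : ℕ) (a : Fin (r - t) → ℕ) (j : Fin (r - t)) :
    emb r t a (1, t + 1 + (j : ℕ)) = a j := by
  have hj : (j : ℕ) < r - t := j.isLt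
  rw [emb, dif_pos ⟨rfl, by omega, by omega⟩]
  congr 1
  apply Fin.ext
  simp
  omega

lemma mem_skewDiag_one (r t : ℕ) (p : ℕ × ℕ) :
    p ∈ skewDiag 1 (fun _ => r) (fun _ => t) ↔ p.1 = 1 ∧ t < p.2 ∧ p.2 ≤ r := by
  constructor
  · rintro ⟨h1, h2, h3, h4⟩
    exact ⟨by omega, h3, h4⟩
  · rintro ⟨h1, h2, h3⟩
    exact ⟨by omega, by omega, h2, h3⟩

lemma rst_set_eq (r t f : ℕ) :
    {T : ℕ × ℕ → ℕ | IsRST 1 (fun _ => r) (fun _ => t) (fun _ => f) T}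
      = emb r t '' ↑(idxSet (r - t) f) := by
  ext T
  simp only [Set.mem_setOf_eq, Set.mem_image, Finset.mem_coe]
  constructor
  · rintro ⟨h0, h1, h2, _h3, h4⟩
    refine ⟨fun j => T (1, t + 1 + (j : ℕ)), ?_, ?_⟩
    · rw [mem_idxSet]
      constructor
      · intro j
        have hj : (j : ℕ) < r - t := j.isLt
        have hmem : (1, t + 1 + (j : ℕ)) ∈ skewDiag 1 (fun _ => r) (fun _ => t) :=
          (mem_skewDiag_one r t _).mpr ⟨rfl, by omega, by omega⟩
        exact ⟨h1 _ hmem, h4 _ hmem⟩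
      · intro i j hij
        have hi : (i : ℕ) < r - t := i.isLt
        have hj : (j : ℕ) < r - t := j.isLt
        exact h2 1 (t + 1 + (i : ℕ)) (t + 1 + (j : ℕ))
          ((mem_skewDiag_one r t _).mpr ⟨rfl, by omega, by omega⟩)
          ((mem_skewDiag_one r t _).mpr ⟨rfl, by omega, by omega⟩)
          (by have : (i : ℕ) < (j : ℕ) := hij; omega)
    · funext p
      by_cases hp : p.1 = 1 ∧ t < p.2 ∧ p.2 ≤ r
      · rw [emb, dif_pos hp]
        apply congrArg T
        apply Prod.ext
        · exact hp.1.symm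
        · show t + 1 + (p.2 - t - 1) = p.2
          omega
      · rw [emb, dif_neg hp]
        exact (h0 p (fun hmem => hp ((mem_skewDiag_one r t p).mp hmem))).symm
  · rintro ⟨a, ha, rfl⟩
    rw [mem_idxSet] at ha
    obtain ⟨hb, hmono⟩ := ha
    have hval : ∀ p ∈ skewDiag 1 (fun _ => r) (fun _ => t),
        ∃ j : Fin (r - t), emb r t a p = a j ∧ (j : ℕ) = p.2 - t - 1 := by
      intro p hp
      obtain ⟨hp1, hp2, hp3⟩ := (mem_skewDiag_one r t p).mp hp
      exact ⟨⟨p.2 - t - 1, by omega⟩, by rw [emb, dif_pos ⟨hp1, hp2, hp3⟩], rfl⟩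
    refine ⟨?_, ?_, ?_, ?_, ?_⟩
    · intro p hp
      rw [emb, dif_neg (fun h => hp ((mem_skewDiag_one r t p).mpr h))]
    · intro p hp
      obtain ⟨j, hj, _⟩ := hval p hp
      rw [hj]
      exact (hb j).1
    · intro i j j' hm hm' hjj
      obtain ⟨u, hu, hu2⟩ := hval _ hm
      obtain ⟨u', hu', hu2'⟩ := hval _ hm'
      rw [hu, hu']
      apply hmono
      obtain ⟨hp1, hp2, hp3⟩ := (mem_skewDiag_one r t _).mp hm
      obtain ⟨hq1, hq2, hq3⟩ := (mem_skewDiag_one r t _).mp hm'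
      show (u : ℕ) < (u' : ℕ)
      simp at hu2 hu2'
      omega
    · intro i i' j hm hm' hii
      obtain ⟨hp1, hp2, hp3⟩ := (mem_skewDiag_one r t _).mp hm
      obtain ⟨hq1, hq2, hq3⟩ := (mem_skewDiag_one r t _).mp hm'
      simp at hp1 hq1
      rw [hp1, hq1]
    · intro p hp
      obtain ⟨j, hj, _⟩ := hval p hp
      rw [hj]
      exact (hb j).2

lemma emb_injOn (r t f : ℕ) : ∀ a ∈ idxSet (r - t) f, ∀ a' ∈ idxSet (r - t) f,
    emb r t a = emb r t a' → a = a' := by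
  intro a _ a' _ h
  funext j
  have := congrFun h (1, t + 1 + (j : ℕ))
  rwa [emb_box, emb_box] at this

lemma sTilde_eq_sum (r t f : ℕ) (z : ℕ → R) (b : ℤ → R) :
    sTilde 1 (fun _ => r) (fun _ => t) (fun _ => f) z b
      = ∑ a ∈ idxSet (r - t) f, Wfun t z b a := by
  classical
  rw [sTilde, rst_set_eq r t f, ← Finset.coe_image, finsum_mem_coe_finset,
    Finset.sum_image (emb_injOn r t f)]
  apply Finset.sum_congr rfl
  intro a _
  simp only [rstWeight, Finset.prod_range_one]
  rw [← Fin.prod_univ_eq_prod_range]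
  unfold Wfun
  apply Finset.prod_congr rfl
  intro j _
  rw [emb_box]
  congr 2
  omega

end Stmt4Aux




/-- One-row case: for `0 ≤ t ≤ r` and `f ≥ 0`,
`s̃_{(r)/(t),(f)}(z|b) = e_{r−t}^{[f|r−t−f−1]}(z|τ^{−t}b)`. -/
theorem statement_4 (R : Type*) [CommRing R] (r t f : ℕ) (ht : t ≤ r)
    (z : ℕ → R) (b : ℤ → R) :
    sTilde 1 (fun _ => r) (fun _ => t) (fun _ => f) z b =
      eC2 ((r : ℤ) - (t : ℤ)) (f : ℤ) ((r : ℤ) - (t : ℤ) - (f : ℤ) - 1) z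
        (fun i => b ((i : ℤ) - (t : ℤ))) := by
  have hcast : (r : ℤ) - (t : ℤ) = ((r - t : ℕ) : ℤ) := by omega
  rw [Stmt4Aux.sTilde_eq_sum r t f z b, Stmt4Aux.sum_W t z b f (r - t), hcast]
  rw [show eC2 ((r - t : ℕ) : ℤ) (f : ℤ) (((r - t : ℕ) : ℤ) - (f : ℤ) - 1) z
      (fun i => b ((i : ℤ) - (t : ℤ)))
      = Stmt4Aux.Efun z (fun i => b ((i : ℤ) - (t : ℤ))) (r - t) f from rfl]
  rw [Stmt4Aux.Efun_eq_Spoly]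
  exact Stmt4Aux.Spoly_congr z _ _
    (fun m f hm => by congr 1; omega) f (r - t)
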